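/- Assume c is admissible with 1/3 ≤ c ≤ 0.3465, assume that every digraph of order N with minimum semi-degree at least 0.343545·N contains a directed cycle of length at most 3, and assume that every oriented graph of order N with minimum semi-degree at least N/3 is strongly connected with diameter at most 4. Let d ≥ 1 be an integer and let D be a triangle-free oriented graph of minimum semi-degree at least d and order n; put m = n/d and suppose m ≤ 3. Then every vertex x of D lies on more than ((11 − 15c + 7c² − c³ − (c² − 3c + 3)·m)/((1 − c)²(2 − c)))·d directed 4-cycles. -/

import Mathlib

/-- A digraph is modeled as an irreflexive relation `G` on a finite vertex type.
`outDeg G x` is the out-degree of `x`. -/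
noncomputable def outDeg {V : Type} (G : V → V → Prop) (x : V) : ℕ := {y | G x y}.ncard

/-- In-degree of `x`. -/
noncomputable def inDeg {V : Type} (G : V → V → Prop) (x : V) : ℕ := {y | G y x}.ncard

/-- `G` is an oriented graph: no digons (hence also no loops). -/
def Oriented {V : Type} (G : V → V → Prop) : Prop := ∀ x y, G x y → ¬ G y x

/-- `G` contains a directed cycle of length at most 3 (a digon or a directed triangle;
for loopless digraphs the listed vertices are automatically distinct). -/
def HasCycleLe3 {V : Type} (G : V → V → Prop) : Prop :=
  (∃ x y, G x y ∧ G y x) ∨ ∃ x y z, G x y ∧ G y z ∧ G z x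

/-- `G` contains a directed triangle. -/
def HasTriangle {V : Type} (G : V → V → Prop) : Prop := ∃ x y z, G x y ∧ G y z ∧ G z x

/-- `c` is admissible: every digraph of order `N` with minimum out-degree at least `c·N`
contains a directed cycle of length at most 3. -/
def Admissible (c : ℝ) : Prop :=
  ∀ (W : Type) [Fintype W] (H : W → W → Prop), Irreflexive H →
    (∀ w, c * (Fintype.card W : ℝ) ≤ (outDeg H w : ℝ)) → HasCycleLe3 H

/-- `G` is strongly connected. -/
def StronglyConnected {V : Type} (G : V → V → Prop) : Prop :=
  ∀ x y : V, Relation.ReflTransGen G x y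

/-- The digraph obtained from `G` by deleting the vertex set `S` is strongly connected. -/
def DelStrong {V : Type} (G : V → V → Prop) (S : Set V) : Prop :=
  ∀ x ∉ S, ∀ y ∉ S, Relation.ReflTransGen (fun a b => G a b ∧ a ∉ S ∧ b ∉ S) x y

/-- The strong connectivity of `G`: the least cardinality of a set `S` of vertices such
that `G − S` is not strongly connected (`0` if `G` itself is not strongly connected). -/
noncomputable def strongConn {V : Type} (G : V → V → Prop) : ℕ :=
  sInf {k : ℕ | ∃ S : Set V, S.ncard = k ∧ ¬ DelStrong G S}

/-- The triple `t = (a, b, c)` encodes the directed 4-cycle `x → a → b → c → x`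
through `x`, with the four vertices pairwise distinct. -/
def FourCycleAt {V : Type} (G : V → V → Prop) (x : V) (t : V × V × V) : Prop :=
  G x t.1 ∧ G t.1 t.2.1 ∧ G t.2.1 t.2.2 ∧ G t.2.2 x ∧
    x ≠ t.1 ∧ x ≠ t.2.1 ∧ x ≠ t.2.2 ∧ t.1 ≠ t.2.1 ∧ t.1 ≠ t.2.2 ∧ t.2.1 ≠ t.2.2

/-- The vertex set of the 4-cycle through `x` encoded by `t`. -/
def cycVertsAt {V : Type} (x : V) (t : V × V × V) : Set V := {x, t.1, t.2.1, t.2.2}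

/-- There is a directed walk of length exactly `p` from `x` to `y` in `G`. -/
def ReachIn {V : Type} (G : V → V → Prop) (p : ℕ) (x y : V) : Prop :=
  ∃ f : ℕ → V, f 0 = x ∧ f p = y ∧ ∀ i < p, G (f i) (f (i + 1))

/-- Directed distance from `x` to `y` (length of a shortest directed path). -/
noncomputable def ddist {V : Type} (G : V → V → Prop) (x y : V) : ℕ :=
  sInf {p : ℕ | ReachIn G p x y}

/-- The number of arcs of `G`. -/
noncomputable def numArcs {V : Type} (G : V → V → Prop) : ℕ := {p : V × V | G p.1 p.2}.ncard

/-- The minimum out-degree `δ⁺(G)`. -/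
noncomputable def minOutDeg {V : Type} (G : V → V → Prop) : ℕ :=
  sInf {k : ℕ | ∃ v, outDeg G v = k}

/-- The minimum in-degree `δ⁻(G)`. -/
noncomputable def minInDeg {V : Type} (G : V → V → Prop) : ℕ :=
  sInf {k : ℕ | ∃ v, inDeg G v = k}

/-- The minimum semi-degree `δ⁰(G)`. -/
noncomputable def minSemiDeg {V : Type} (G : V → V → Prop) : ℕ :=
  sInf {k : ℕ | ∃ v, min (outDeg G v) (inDeg G v) = k}

/-- The number of unordered pairs of distinct non-adjacent vertices of `G`. -/
noncomputable def nonAdjPairs {V : Type} (G : V → V → Prop) : ℕ :=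
  {s : Sym2 V | ∃ x y : V, s = s(x, y) ∧ x ≠ y ∧ ¬ G x y ∧ ¬ G y x}.ncard
lemma aux_ncard_eq {V : Type} [Fintype V] [DecidableEq V] (G : V → V → Prop) [DecidableRel G]
    (hor : Oriented G) (x : V) :
    {t : V × V × V | FourCycleAt G x t}.ncard
      = ∑ b : V, (Finset.univ.filter fun a : V => G x a ∧ G a b).card *
          (Finset.univ.filter fun y : V => G b y ∧ G y x).card := by
  classical
  have hirr : ∀ a : V, ¬ G a a := fun a h => hor a a h h
  have hset : {t : V × V × V | FourCycleAt G x t}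
      = ↑(Finset.univ.filter fun t : V × V × V =>
          G x t.1 ∧ G t.1 t.2.1 ∧ G t.2.1 t.2.2 ∧ G t.2.2 x) := by
    ext ⟨a, b, y⟩
    simp only [Set.mem_setOf_eq, Finset.coe_filter, Finset.mem_univ, true_and, FourCycleAt]
    constructor
    · rintro ⟨h1, h2, h3, h4, _⟩
      exact ⟨h1, h2, h3, h4⟩
    · rintro ⟨h1, h2, h3, h4⟩
      refine ⟨h1, h2, h3, h4, ?_, ?_, ?_, ?_, ?_, ?_⟩
      · rintro rfl; exact hirr _ h1
      · rintro rfl; exact hor _ _ h1 h2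
      · rintro rfl; exact hirr _ h4
      · rintro rfl; exact hirr _ h2
      · rintro rfl; exact hor _ _ h1 h4
      · rintro rfl; exact hirr _ h3
  rw [hset, Set.ncard_coe_finset]
  rw [Finset.card_eq_sum_card_fiberwise
    (f := fun t : V × V × V => t.2.1) (t := Finset.univ) (fun _ _ => Finset.mem_univ _)]
  refine Finset.sum_congr rfl fun b _ => ?_
  rw [← Finset.card_product]
  refine Finset.card_nbij' (fun t => (t.1, t.2.2)) (fun z => (z.1, b, z.2)) ?_ ?_ ?_ ?_
  · rintro ⟨t1, t2, t3⟩ ht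
    simp only [Finset.mem_coe, Finset.mem_filter, Finset.mem_univ, true_and] at ht
    obtain ⟨⟨h1, h2, h3, h4⟩, hb⟩ := ht
    subst hb
    simp only [Finset.mem_coe, Finset.mem_product, Finset.mem_filter, Finset.mem_univ, true_and]
    exact ⟨⟨h1, h2⟩, h3, h4⟩
  · rintro ⟨z1, z2⟩ hz
    simp only [Finset.mem_coe, Finset.mem_product, Finset.mem_filter, Finset.mem_univ, true_and] at hz
    simp only [Finset.mem_coe, Finset.mem_filter, Finset.mem_univ, true_and]
    exact ⟨⟨hz.1.1, hz.1.2, hz.2.1, hz.2.2⟩, trivial⟩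
  · rintro ⟨t1, t2, t3⟩ ht
    simp only [Finset.mem_coe, Finset.mem_filter, Finset.mem_univ, true_and] at ht
    simp [ht.2]
  · rintro ⟨z1, z2⟩ hz
    rfl

set_option maxHeartbeats 1600000 in
/-- Theorem 1.6 of the paper. -/
theorem stmt4 (c : ℝ) (hc1 : 1 / 3 ≤ c) (hc2 : c ≤ 0.3465) (hadm : Admissible c)
    (h343 : ∀ (W : Type) [Fintype W] (H : W → W → Prop), Irreflexive H →
      (∀ w, (0.343545 : ℝ) * (Fintype.card W : ℝ) ≤ (outDeg H w : ℝ) ∧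
            (0.343545 : ℝ) * (Fintype.card W : ℝ) ≤ (inDeg H w : ℝ)) → HasCycleLe3 H)
    (hdiam4 : ∀ (W : Type) [Fintype W] (H : W → W → Prop), Oriented H →
      (∀ w, (Fintype.card W : ℝ) / 3 ≤ (outDeg H w : ℝ) ∧
            (Fintype.card W : ℝ) / 3 ≤ (inDeg H w : ℝ)) →
      ∀ u v : W, ∃ p ≤ 4, ReachIn H p u v)
    (d : ℕ) (hd : 1 ≤ d)
    (V : Type) [Fintype V] (G : V → V → Prop) (hor : Oriented G)
    (htf : ¬ HasTriangle G)
    (hdeg : ∀ v : V, d ≤ outDeg G v ∧ d ≤ inDeg G v)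
    (m : ℝ) (hm : m = (Fintype.card V : ℝ) / (d : ℝ)) (hm3 : m ≤ 3)
    (x : V) :
    (11 - 15 * c + 7 * c ^ 2 - c ^ 3 - (c ^ 2 - 3 * c + 3) * m) /
        ((1 - c) ^ 2 * (2 - c)) * (d : ℝ)
      < ({t : V × V × V | FourCycleAt G x t}.ncard : ℝ) := by
  classical
  have hirr : ∀ a : V, ¬ G a a := fun a h => hor a a h h
  have hnc : ¬ HasCycleLe3 G := by
    rintro (⟨a, b, hab, hba⟩ | ⟨a, b, e, h1, h2, h3⟩)
    · exact hor a b hab hba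
    · exact htf ⟨a, b, e, h1, h2, h3⟩
  have houtd : ∀ a : V, outDeg G a = (Finset.univ.filter fun y => G a y).card := by
    intro a
    have h : {y | G a y} = ↑(Finset.univ.filter fun y => G a y) := by ext y; simp
    rw [outDeg, h, Set.ncard_coe_finset]
  have hind : ∀ a : V, inDeg G a = (Finset.univ.filter fun y => G y a).card := by
    intro a
    have h : {y | G y a} = ↑(Finset.univ.filter fun y => G y a) := by ext y; simp
    rw [inDeg, h, Set.ncard_coe_finset]
  have hd1 : (1 : ℝ) ≤ (d : ℝ) := by exact_mod_cast hd
  have hdpos : (0 : ℝ) < (d : ℝ) := by linarith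
  -- lower bound for m from the 0.343545 hypothesis
  have hmlow : 1 < (0.343545 : ℝ) * m := by
    have hw : ¬ ∀ w : V, (0.343545 : ℝ) * (Fintype.card V : ℝ) ≤ (outDeg G w : ℝ) ∧
        (0.343545 : ℝ) * (Fintype.card V : ℝ) ≤ (inDeg G w : ℝ) :=
      fun hall => hnc (h343 V G (fun a => hirr a) hall)
    push_neg at hw
    obtain ⟨w, hw⟩ := hw
    have hdw : (d : ℝ) < 0.343545 * (Fintype.card V : ℝ) := by
      by_cases hcase : (0.343545 : ℝ) * (Fintype.card V : ℝ) ≤ (outDeg G w : ℝ)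
      · have h2 := hw hcase
        have h3 : (d : ℝ) ≤ (inDeg G w : ℝ) := by exact_mod_cast (hdeg w).2
        linarith
      · push_neg at hcase
        have h3 : (d : ℝ) ≤ (outDeg G w : ℝ) := by exact_mod_cast (hdeg w).1
        linarith
    rw [hm, ← mul_div_assoc]
    exact (one_lt_div hdpos).mpr hdw
  -- the sets
  set P : Finset V := Finset.univ.filter (fun a => G x a) with hPdef
  set M : Finset V := Finset.univ.filter (fun y => G y x) with hMdef
  set u : V → ℕ := fun b => (P.filter fun a => G a b).card with hudef
  set v : V → ℕ := fun b => (M.filter fun y => G b y).card with hvdef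
  have hcount : {t : V × V × V | FourCycleAt G x t}.ncard = ∑ b : V, u b * v b := by
    rw [aux_ncard_eq G hor x]
    refine Finset.sum_congr rfl fun b _ => ?_
    have h1 : (Finset.univ.filter fun a : V => G x a ∧ G a b) = P.filter fun a => G a b := by
      rw [hPdef, Finset.filter_filter]
    have h2 : (Finset.univ.filter fun y : V => G b y ∧ G y x) = M.filter fun y => G b y := by
      ext y
      rw [hMdef, Finset.filter_filter]
      simp [and_comm]
    rw [h1, h2, hudef, hvdef]
  have hpd : d ≤ P.card := by
    have h : P.card = outDeg G x := (houtd x).symm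
    rw [h]; exact (hdeg x).1
  have hqd : d ≤ M.card := by
    have h : M.card = inDeg G x := (hind x).symm
    rw [h]; exact (hdeg x).2
  have hub : ∀ b, u b ≤ P.card := fun b => Finset.card_filter_le _ _
  have hvb : ∀ b, v b ≤ M.card := fun b => Finset.card_filter_le _ _
  -- zero lemmas
  have hmemP : ∀ a, a ∈ P ↔ G x a := by intro a; simp [hPdef]
  have hmemM : ∀ a, a ∈ M ↔ G a x := by intro a; simp [hMdef]
  have huM : ∀ b ∈ M, u b = 0 := by
    intro b hb
    rw [hudef]
    rw [Finset.card_eq_zero, Finset.filter_eq_empty_iff]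
    intro a ha hab
    exact htf ⟨x, a, b, (hmemP a).mp ha, hab, (hmemM b).mp hb⟩
  have hux : u x = 0 := by
    rw [hudef]
    rw [Finset.card_eq_zero, Finset.filter_eq_empty_iff]
    intro a ha hax
    exact hor x a ((hmemP a).mp ha) hax
  have hvP : ∀ b ∈ P, v b = 0 := by
    intro b hb
    rw [hvdef]
    rw [Finset.card_eq_zero, Finset.filter_eq_empty_iff]
    intro y hy hby
    exact htf ⟨x, b, y, (hmemP b).mp hb, hby, (hmemM y).mp hy⟩
  have hvx : v x = 0 := by
    rw [hvdef]
    rw [Finset.card_eq_zero, Finset.filter_eq_empty_iff]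
    intro y hy hxy
    exact hor x y hxy ((hmemM y).mp hy)
  -- total sums
  have hUsum : P.card * d ≤ ∑ b : V, u b := by
    have h1 : ∑ b : V, u b = ∑ a ∈ P, (Finset.univ.filter fun y => G a y).card := by
      calc ∑ b : V, u b = ∑ b : V, ∑ a ∈ P, (if G a b then 1 else 0) := by
            refine Finset.sum_congr rfl fun b _ => ?_
            rw [hudef]; exact Finset.card_filter _ _
        _ = ∑ a ∈ P, ∑ b : V, (if G a b then 1 else 0) := Finset.sum_comm
        _ = ∑ a ∈ P, (Finset.univ.filter fun y => G a y).card := by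
            refine Finset.sum_congr rfl fun a _ => (Finset.card_filter _ _).symm
    rw [h1]
    calc P.card * d = ∑ _a ∈ P, d := by rw [Finset.sum_const, smul_eq_mul]
      _ ≤ _ := Finset.sum_le_sum fun a _ => by
          have := (hdeg a).1; rwa [houtd a] at this
  have hVsum : M.card * d ≤ ∑ b : V, v b := by
    have h1 : ∑ b : V, v b = ∑ y ∈ M, (Finset.univ.filter fun b => G b y).card := by
      calc ∑ b : V, v b = ∑ b : V, ∑ y ∈ M, (if G b y then 1 else 0) := by
            refine Finset.sum_congr rfl fun b _ => ?_
            rw [hvdef]; exact Finset.card_filter _ _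
        _ = ∑ y ∈ M, ∑ b : V, (if G b y then 1 else 0) := Finset.sum_comm
        _ = ∑ y ∈ M, (Finset.univ.filter fun b => G b y).card := by
            refine Finset.sum_congr rfl fun y _ => (Finset.card_filter _ _).symm
    rw [h1]
    calc M.card * d = ∑ _y ∈ M, d := by rw [Finset.sum_const, smul_eq_mul]
      _ ≤ _ := Finset.sum_le_sum fun y _ => by
          have := (hdeg y).2; rwa [hind y] at this
  -- edge bounds within P and M
  have hEP : 2 * ∑ b ∈ P, u b + P.card ≤ P.card * P.card := by
    have hswap : ∑ b ∈ P, (P.filter fun a => G b a).card = ∑ b ∈ P, u b := by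
      calc ∑ b ∈ P, (P.filter fun a => G b a).card
          = ∑ b ∈ P, ∑ a ∈ P, (if G b a then 1 else 0) := by
            exact Finset.sum_congr rfl fun b _ => Finset.card_filter _ _
        _ = ∑ a ∈ P, ∑ b ∈ P, (if G b a then 1 else 0) := Finset.sum_comm
        _ = ∑ a ∈ P, (P.filter fun b => G b a).card := by
            exact Finset.sum_congr rfl fun a _ => (Finset.card_filter _ _).symm
        _ = ∑ b ∈ P, u b := by
            refine Finset.sum_congr rfl fun a _ => ?_
            rw [hudef]
    have hper : ∀ b ∈ P, u b + (P.filter fun a => G b a).card ≤ P.card - 1 := by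
      intro b hb
      have hdisj : Disjoint (P.filter fun a => G a b) (P.filter fun a => G b a) := by
        rw [Finset.disjoint_left]
        intro a ha1 ha2
        exact hor a b (Finset.mem_filter.mp ha1).2 (Finset.mem_filter.mp ha2).2
      have hsub : (P.filter fun a => G a b) ∪ (P.filter fun a => G b a) ⊆ P.erase b := by
        intro a ha
        rcases Finset.mem_union.mp ha with h | h
        · refine Finset.mem_erase.mpr ⟨?_, (Finset.mem_filter.mp h).1⟩
          rintro rfl; exact hirr a (Finset.mem_filter.mp h).2
        · refine Finset.mem_erase.mpr ⟨?_, (Finset.mem_filter.mp h).1⟩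
          rintro rfl; exact hirr a (Finset.mem_filter.mp h).2
      calc u b + (P.filter fun a => G b a).card
          = ((P.filter fun a => G a b) ∪ (P.filter fun a => G b a)).card := by
            rw [hudef, Finset.card_union_of_disjoint hdisj]
        _ ≤ (P.erase b).card := Finset.card_le_card hsub
        _ = P.card - 1 := Finset.card_erase_of_mem hb
    have hper' : ∀ b ∈ P, u b + (P.filter fun a => G b a).card + 1 ≤ P.card := by
      intro b hb
      have h1 := hper b hb
      omega
    calc 2 * ∑ b ∈ P, u b + P.card
        = ∑ b ∈ P, u b + ∑ b ∈ P, (P.filter fun a => G b a).card + ∑ _b ∈ P, 1 := by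
          rw [hswap, Finset.sum_const, smul_eq_mul, mul_one]; ring
      _ = ∑ b ∈ P, (u b + (P.filter fun a => G b a).card + 1) := by
          rw [Finset.sum_add_distrib, Finset.sum_add_distrib]
      _ ≤ ∑ _b ∈ P, P.card := Finset.sum_le_sum hper'
      _ = P.card * P.card := by rw [Finset.sum_const, smul_eq_mul]
  have hEM : 2 * ∑ b ∈ M, v b + M.card ≤ M.card * M.card := by
    have hswap : ∑ b ∈ M, (M.filter fun y => G y b).card = ∑ b ∈ M, v b := by
      calc ∑ b ∈ M, (M.filter fun y => G y b).card
          = ∑ b ∈ M, ∑ y ∈ M, (if G y b then 1 else 0) := by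
            exact Finset.sum_congr rfl fun b _ => Finset.card_filter _ _
        _ = ∑ y ∈ M, ∑ b ∈ M, (if G y b then 1 else 0) := Finset.sum_comm
        _ = ∑ y ∈ M, (M.filter fun b => G y b).card := by
            exact Finset.sum_congr rfl fun y _ => (Finset.card_filter _ _).symm
        _ = ∑ b ∈ M, v b := by
            refine Finset.sum_congr rfl fun y _ => ?_
            rw [hvdef]
    have hper : ∀ b ∈ M, v b + (M.filter fun y => G y b).card ≤ M.card - 1 := by
      intro b hb
      have hdisj : Disjoint (M.filter fun y => G b y) (M.filter fun y => G y b) := by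
        rw [Finset.disjoint_left]
        intro y hy1 hy2
        exact hor b y (Finset.mem_filter.mp hy1).2 (Finset.mem_filter.mp hy2).2
      have hsub : (M.filter fun y => G b y) ∪ (M.filter fun y => G y b) ⊆ M.erase b := by
        intro y hy
        rcases Finset.mem_union.mp hy with h | h
        · refine Finset.mem_erase.mpr ⟨?_, (Finset.mem_filter.mp h).1⟩
          rintro rfl; exact hirr y (Finset.mem_filter.mp h).2
        · refine Finset.mem_erase.mpr ⟨?_, (Finset.mem_filter.mp h).1⟩
          rintro rfl; exact hirr y (Finset.mem_filter.mp h).2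
      calc v b + (M.filter fun y => G y b).card
          = ((M.filter fun y => G b y) ∪ (M.filter fun y => G y b)).card := by
            rw [hvdef, Finset.card_union_of_disjoint hdisj]
        _ ≤ (M.erase b).card := Finset.card_le_card hsub
        _ = M.card - 1 := Finset.card_erase_of_mem hb
    have hper' : ∀ b ∈ M, v b + (M.filter fun y => G y b).card + 1 ≤ M.card := by
      intro b hb
      have h1 := hper b hb
      omega
    calc 2 * ∑ b ∈ M, v b + M.card
        = ∑ b ∈ M, v b + ∑ b ∈ M, (M.filter fun y => G y b).card + ∑ _b ∈ M, 1 := by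
          rw [hswap, Finset.sum_const, smul_eq_mul, mul_one]; ring
      _ = ∑ b ∈ M, (v b + (M.filter fun y => G y b).card + 1) := by
          rw [Finset.sum_add_distrib, Finset.sum_add_distrib]
      _ ≤ ∑ _b ∈ M, M.card := Finset.sum_le_sum hper'
      _ = M.card * M.card := by rw [Finset.sum_const, smul_eq_mul]
  -- the set S and its complement
  have hxP : x ∉ P := fun h => hirr x ((hmemP x).mp h)
  have hxM : x ∉ M := fun h => hirr x ((hmemM x).mp h)
  have hdisjPM : Disjoint P M := by
    rw [Finset.disjoint_left]
    intro a haP haM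
    exact hor x a ((hmemP a).mp haP) ((hmemM a).mp haM)
  set S : Finset V := P ∪ (M ∪ {x}) with hSdef
  have hdisjP : Disjoint P (M ∪ {x}) :=
    Finset.disjoint_union_right.mpr ⟨hdisjPM, Finset.disjoint_singleton_right.mpr hxP⟩
  have hdisjM : Disjoint M ({x} : Finset V) := Finset.disjoint_singleton_right.mpr hxM
  have hScard : S.card = P.card + M.card + 1 := by
    rw [hSdef, Finset.card_union_of_disjoint hdisjP, Finset.card_union_of_disjoint hdisjM,
      Finset.card_singleton]
    omega
  have hsumSu : ∑ b ∈ S, u b = ∑ b ∈ P, u b := by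
    rw [hSdef, Finset.sum_union hdisjP, Finset.sum_union hdisjM, Finset.sum_singleton, hux,
      Finset.sum_eq_zero huM]
    simp
  have hsumSv : ∑ b ∈ S, v b = ∑ b ∈ M, v b := by
    rw [hSdef, Finset.sum_union hdisjP, Finset.sum_union hdisjM, Finset.sum_singleton, hvx,
      Finset.sum_eq_zero hvP]
    simp
  have hcomplu : ∑ b ∈ S, u b + ∑ b ∈ Sᶜ, u b = ∑ b : V, u b := Finset.sum_add_sum_compl S u
  have hcomplv : ∑ b ∈ S, v b + ∑ b ∈ Sᶜ, v b = ∑ b : V, v b := Finset.sum_add_sum_compl S v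
  have hcardcompl : S.card + Sᶜ.card = Fintype.card V := Finset.card_add_card_compl S
  have hsubuv : ∑ b ∈ Sᶜ, u b * v b ≤ ∑ b : V, u b * v b :=
    Finset.sum_le_sum_of_subset (Finset.subset_univ _)
  -- move to the reals
  have hp1 : 1 ≤ P.card := le_trans hd hpd
  have hq1 : 1 ≤ M.card := le_trans hd hqd
  have hpR : (d : ℝ) ≤ (P.card : ℝ) := by exact_mod_cast hpd
  have hqR : (d : ℝ) ≤ (M.card : ℝ) := by exact_mod_cast hqd
  have hp0 : (0 : ℝ) ≤ (P.card : ℝ) := by positivity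
  have hq0 : (0 : ℝ) ≤ (M.card : ℝ) := by positivity
  have hnle : (Fintype.card V : ℝ) ≤ 3 * (d : ℝ) := by
    have := hm3
    rw [hm] at this
    calc (Fintype.card V : ℝ) = ((Fintype.card V : ℝ) / d) * d := by field_simp
      _ ≤ 3 * d := by nlinarith
  -- key per-vertex inequality summed over the complement
  have hkey : ∀ b ∈ Sᶜ, (M.card : ℝ) * (u b : ℝ) + (P.card : ℝ) * (v b : ℝ)
      - (P.card : ℝ) * (M.card : ℝ) ≤ (u b : ℝ) * (v b : ℝ) := by
    intro b _
    have h1 : (u b : ℝ) ≤ (P.card : ℝ) := by exact_mod_cast hub b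
    have h2 : (v b : ℝ) ≤ (M.card : ℝ) := by exact_mod_cast hvb b
    nlinarith [mul_nonneg (sub_nonneg.mpr h1) (sub_nonneg.mpr h2)]
  have hsumkey : (M.card : ℝ) * ((∑ b ∈ Sᶜ, u b : ℕ) : ℝ) + (P.card : ℝ) * ((∑ b ∈ Sᶜ, v b : ℕ) : ℝ)
      - (P.card : ℝ) * (M.card : ℝ) * (Sᶜ.card : ℝ) ≤ ((∑ b ∈ Sᶜ, u b * v b : ℕ) : ℝ) := by
    have h := Finset.sum_le_sum hkey
    have hL : ∑ b ∈ Sᶜ, ((M.card : ℝ) * (u b : ℝ) + (P.card : ℝ) * (v b : ℝ)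
        - (P.card : ℝ) * (M.card : ℝ))
        = (M.card : ℝ) * ((∑ b ∈ Sᶜ, u b : ℕ) : ℝ) + (P.card : ℝ) * ((∑ b ∈ Sᶜ, v b : ℕ) : ℝ)
          - (P.card : ℝ) * (M.card : ℝ) * (Sᶜ.card : ℝ) := by
      rw [Finset.sum_sub_distrib, Finset.sum_add_distrib, ← Finset.mul_sum, ← Finset.mul_sum,
        Finset.sum_const, nsmul_eq_mul]
      push_cast
      ring
    have hR : ∑ b ∈ Sᶜ, (u b : ℝ) * (v b : ℝ) = ((∑ b ∈ Sᶜ, u b * v b : ℕ) : ℝ) := by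
      push_cast
      rfl
    rw [hL, hR] at h
    exact h
  -- the main counting bound
  have hC2 : 2 * (d : ℝ) ^ 2 ≤ ((∑ b : V, u b * v b : ℕ) : ℝ) := by
    have f1 : ((∑ b ∈ Sᶜ, u b * v b : ℕ) : ℝ) ≤ ((∑ b : V, u b * v b : ℕ) : ℝ) := by
      exact_mod_cast hsubuv
    have f2 : ((∑ b ∈ Sᶜ, u b : ℕ) : ℝ) = ((∑ b : V, u b : ℕ) : ℝ) - ((∑ b ∈ P, u b : ℕ) : ℝ) := by
      have h : (∑ b ∈ P, u b) + (∑ b ∈ Sᶜ, u b) = ∑ b : V, u b := by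
        rw [← hsumSu]; exact hcomplu
      have h2 : (((∑ b ∈ P, u b) + (∑ b ∈ Sᶜ, u b) : ℕ) : ℝ) = ((∑ b : V, u b : ℕ) : ℝ) := by
        exact_mod_cast h
      rw [Nat.cast_add] at h2
      linarith
    have f3 : ((∑ b ∈ Sᶜ, v b : ℕ) : ℝ) = ((∑ b : V, v b : ℕ) : ℝ) - ((∑ b ∈ M, v b : ℕ) : ℝ) := by
      have h : (∑ b ∈ M, v b) + (∑ b ∈ Sᶜ, v b) = ∑ b : V, v b := by
        rw [← hsumSv]; exact hcomplv
      have h2 : (((∑ b ∈ M, v b) + (∑ b ∈ Sᶜ, v b) : ℕ) : ℝ) = ((∑ b : V, v b : ℕ) : ℝ) := by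
        exact_mod_cast h
      rw [Nat.cast_add] at h2
      linarith
    have f8 : (Sᶜ.card : ℝ) = (Fintype.card V : ℝ) - (P.card : ℝ) - (M.card : ℝ) - 1 := by
      have h := congrArg (fun k : ℕ => (k : ℝ)) hcardcompl
      push_cast at h
      rw [hScard] at hcardcompl
      have h2 := congrArg (fun k : ℕ => (k : ℝ)) hcardcompl
      push_cast at h2
      linarith
    have f4 : (P.card : ℝ) * (d : ℝ) ≤ ((∑ b : V, u b : ℕ) : ℝ) := by exact_mod_cast hUsum
    have f5 : (M.card : ℝ) * (d : ℝ) ≤ ((∑ b : V, v b : ℕ) : ℝ) := by exact_mod_cast hVsum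
    have f6 : 2 * ((∑ b ∈ P, u b : ℕ) : ℝ) ≤ (P.card : ℝ) ^ 2 - (P.card : ℝ) := by
      have h2 : 2 * ((∑ b ∈ P, u b : ℕ) : ℝ) + (P.card : ℝ) ≤ (P.card : ℝ) * (P.card : ℝ) := by
        exact_mod_cast hEP
      nlinarith [h2]
    have f7 : 2 * ((∑ b ∈ M, v b : ℕ) : ℝ) ≤ (M.card : ℝ) ^ 2 - (M.card : ℝ) := by
      have h2 : 2 * ((∑ b ∈ M, v b : ℕ) : ℝ) + (M.card : ℝ) ≤ (M.card : ℝ) * (M.card : ℝ) := by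
        exact_mod_cast hEM
      nlinarith [h2]
    rw [f2, f3, f8] at hsumkey
    have g1 : (M.card : ℝ) * ((P.card : ℝ) * (d : ℝ)) ≤ (M.card : ℝ) * ((∑ b : V, u b : ℕ) : ℝ) :=
      mul_le_mul_of_nonneg_left f4 hq0
    have g2 : (P.card : ℝ) * ((M.card : ℝ) * (d : ℝ)) ≤ (P.card : ℝ) * ((∑ b : V, v b : ℕ) : ℝ) :=
      mul_le_mul_of_nonneg_left f5 hp0
    have g3 : (0:ℝ) ≤ (M.card : ℝ) * ((P.card : ℝ)^2 - (P.card : ℝ) - 2 * ((∑ b ∈ P, u b : ℕ) : ℝ)) :=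
      mul_nonneg hq0 (by linarith)
    have g4 : (0:ℝ) ≤ (P.card : ℝ) * ((M.card : ℝ)^2 - (M.card : ℝ) - 2 * ((∑ b ∈ M, v b : ℕ) : ℝ)) :=
      mul_nonneg hp0 (by linarith)
    have g5 : (0:ℝ) ≤ (P.card : ℝ) * (M.card : ℝ) * (3 * (d:ℝ) - (Fintype.card V : ℝ)) :=
      mul_nonneg (mul_nonneg hp0 hq0) (by linarith)
    have g6 : (0:ℝ) ≤ (P.card : ℝ) * (M.card : ℝ) * ((P.card : ℝ) - (d:ℝ)) :=
      mul_nonneg (mul_nonneg hp0 hq0) (by linarith)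
    have g7 : (0:ℝ) ≤ (P.card : ℝ) * (M.card : ℝ) * ((M.card : ℝ) - (d:ℝ)) :=
      mul_nonneg (mul_nonneg hp0 hq0) (by linarith)
    have g8 : (0:ℝ) ≤ (M.card : ℝ) * ((P.card : ℝ) - (d:ℝ)) :=
      mul_nonneg hq0 (by linarith)
    have g9 : (0:ℝ) ≤ (d:ℝ) * ((M.card : ℝ) - (d:ℝ)) :=
      mul_nonneg (le_of_lt hdpos) (by linarith)
    nlinarith [hsumkey, f1, g1, g2, g3, g4, g5, g6, g7, g8, g9]
  -- numeric endgame
  have hden : (0:ℝ) < (1 - c) ^ 2 * (2 - c) := by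
    have h1 : (0:ℝ) < 1 - c := by nlinarith
    have h2 : (0:ℝ) < 2 - c := by nlinarith
    positivity
  have hnum : 11 - 15 * c + 7 * c ^ 2 - c ^ 3 - (c ^ 2 - 3 * c + 3) * m
      < 2 * ((1 - c) ^ 2 * (2 - c)) := by
    have h13 : (0:ℝ) ≤ c - 1/3 := by linarith
    have h34 : (0:ℝ) ≤ 0.3465 - c := by nlinarith
    have hq3 : (0:ℝ) < 3 - 3*c + c^2 := by nlinarith
    have hkeym : (0:ℝ) < (3 - 3*c + c^2) * (0.343545 * m - 1) :=
      mul_pos hq3 (by linarith [hmlow])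
    nlinarith [hkeym, h13, h34, mul_nonneg h13 h34, mul_nonneg (mul_nonneg h13 h34) h34,
      mul_nonneg (mul_nonneg h13 h13) h34, mul_nonneg (mul_nonneg h13 h13) h13,
      mul_nonneg (mul_nonneg h34 h34) h34]
  rw [hcount]
  rw [div_mul_eq_mul_div, div_lt_iff₀ hden]
  have e1 : (0:ℝ) ≤ (((∑ b : V, u b * v b : ℕ) : ℝ) - 2 * (d:ℝ)^2) * ((1 - c) ^ 2 * (2 - c)) :=
    mul_nonneg (by linarith) (le_of_lt hden)
  have e2 : (0:ℝ) < (d:ℝ) * (2 * ((1 - c) ^ 2 * (2 - c))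
      - (11 - 15 * c + 7 * c ^ 2 - c ^ 3 - (c ^ 2 - 3 * c + 3) * m)) :=
    mul_pos hdpos (by linarith)
  have e3 : (0:ℝ) ≤ 2 * ((1 - c) ^ 2 * (2 - c)) * ((d:ℝ) * ((d:ℝ) - 1)) :=
    mul_nonneg (by linarith) (mul_nonneg (le_of_lt hdpos) (by linarith))
  nlinarith [e1, e2, e3]
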